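/- Let a be a real number with 0 < a < 1 and define h(x) = x·(1 + a^x)/(1 − a^x) for x > 0. Let ℓ₁, m₁, ℓ₂, m₂ be natural numbers ≥ 1 with ℓ₁ + m₁ = ℓ₂ + m₂ and |(ℓ₁ : ℝ) − m₁| < |(ℓ₂ : ℝ) − m₂|. Then h(ℓ₁) + h(m₁) < h(ℓ₂) + h(m₂). -/

import Mathlib

open Real Set

lemma key_exp (t : ℝ) (ht : 0 < t) : 2 * (Real.exp t - 1) < t * (Real.exp t + 1) := by
  set g : ℝ → ℝ := fun s => s * Real.exp s + s - 2 * Real.exp s + 2 with hg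
  have hder : ∀ s : ℝ, HasDerivAt g ((s - 1) * Real.exp s + 1) s := by
    intro s
    have h1 : HasDerivAt (fun s : ℝ => s * Real.exp s) (1 * Real.exp s + s * Real.exp s) s :=
      (hasDerivAt_id s).mul (Real.hasDerivAt_exp s)
    have h2 : HasDerivAt g (1 * Real.exp s + s * Real.exp s + 1 - 2 * Real.exp s) s :=
      ((h1.add (hasDerivAt_id s)).sub ((Real.hasDerivAt_exp s).const_mul 2)).add_const 2
    convert h2 using 1; ring
  have hmono : StrictMonoOn g (Set.Ici (0:ℝ)) := by
    apply strictMonoOn_of_deriv_pos (convex_Ici 0)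
    · exact fun x _ => (hder x).continuousAt.continuousWithinAt
    · intro x hx
      rw [interior_Ici] at hx
      rw [(hder x).deriv]
      have h2 : (-x) + 1 < Real.exp (-x) := Real.add_one_lt_exp (neg_lt_zero.mpr hx).ne
      have h3 := mul_lt_mul_of_pos_right h2 (Real.exp_pos x)
      rw [← Real.exp_add, neg_add_cancel, Real.exp_zero] at h3
      nlinarith
  have h0 : g 0 = 0 := by simp [hg]
  have := hmono (Set.self_mem_Ici) (Set.mem_Ici.mpr ht.le) ht
  rw [h0] at this
  simp only [hg] at this
  linarith

lemma h_strictConvex (a : ℝ) (ha0 : 0 < a) (ha1 : a < 1) :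
    StrictConvexOn ℝ (Set.Ioi (0:ℝ)) (fun x : ℝ => x * (1 + a ^ x) / (1 - a ^ x)) := by
  set b := Real.log a with hbdef
  have hb : b < 0 := Real.log_neg ha0 ha1
  have hrw : (fun x : ℝ => x * (1 + a ^ x) / (1 - a ^ x)) =
      (fun x : ℝ => x * (1 + Real.exp (b * x)) / (1 - Real.exp (b * x))) := by
    funext x
    rw [Real.rpow_def_of_pos ha0]
  rw [hrw]
  set u : ℝ → ℝ := fun x => Real.exp (b * x) with hudef
  set G : ℝ → ℝ := fun x => x * (1 + u x) / (1 - u x) with hGdef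
  set G' : ℝ → ℝ := fun x => (1 - u x ^ 2 + 2 * b * x * u x) / (1 - u x) ^ 2 with hG'def
  have hu : ∀ x : ℝ, HasDerivAt u (b * u x) x := by
    intro x
    have h := ((hasDerivAt_id x).const_mul b).exp
    refine h.congr_deriv ?_
    show Real.exp (b * x) * (b * 1) = b * Real.exp (b * x)
    ring
  have hult : ∀ x : ℝ, 0 < x → u x < 1 := by
    intro x hx
    have : b * x < 0 := mul_neg_of_neg_of_pos hb hx
    simpa [hudef] using Real.exp_lt_one_iff.mpr this
  have hupos : ∀ x : ℝ, 0 < u x := fun x => Real.exp_pos _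
  have hG1 : ∀ x : ℝ, 0 < x → HasDerivAt G (G' x) x := by
    intro x hx
    have hne : 1 - u x ≠ 0 := by have := hult x hx; linarith [this]
    have hN : HasDerivAt (fun y : ℝ => y * (1 + u y)) (1 * (1 + u x) + x * (0 + b * u x)) x :=
      (hasDerivAt_id x).mul ((hasDerivAt_const x 1).add (hu x))
    have hD : HasDerivAt (fun y : ℝ => 1 - u y) (0 - b * u x) x :=
      (hasDerivAt_const x 1).sub (hu x)
    have := hN.fun_div hD hne
    refine this.congr_deriv ?_
    ring
  have hG2 : ∀ x : ℝ, 0 < x →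
      HasDerivAt G' ((2 * b * u x * (2 * (1 - u x) + b * x * (1 + u x))) / (1 - u x) ^ 3) x := by
    intro x hx
    have hne : 1 - u x ≠ 0 := by have := hult x hx; linarith [this]
    have hQ : HasDerivAt (fun y : ℝ => 1 - u y ^ 2 + 2 * b * y * u y)
        (0 - 2 * u x ^ 1 * (b * u x) + ((2 * b * 1) * u x + 2 * b * x * (b * u x))) x := by
      have h1 : HasDerivAt (fun y : ℝ => u y ^ 2) (2 * u x ^ 1 * (b * u x)) x := by
        simpa using (hu x).fun_pow 2
      have h2 : HasDerivAt (fun y : ℝ => 2 * b * y) (2 * b * 1) x :=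
        (hasDerivAt_id x).const_mul (2 * b)
      exact ((hasDerivAt_const x 1).sub h1).add (h2.mul (hu x))
    have hD2 : HasDerivAt (fun y : ℝ => (1 - u y) ^ 2) (2 * (1 - u x) ^ 1 * (0 - b * u x)) x :=
      ((hasDerivAt_const x 1).sub (hu x)).pow 2
    have := hQ.fun_div hD2 (pow_ne_zero 2 hne)
    refine this.congr_deriv ?_
    rw [div_eq_div_iff (by positivity) (by positivity)]
    ring
  apply strictConvexOn_of_deriv2_pos (convex_Ioi 0)
  · intro x hx
    exact (hG1 x hx).continuousAt.continuousWithinAt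
  · intro x hx
    rw [interior_Ioi] at hx
    have hx0 : (0:ℝ) < x := hx
    have hev : deriv G =ᶠ[nhds x] G' := by
      filter_upwards [Ioi_mem_nhds hx0] with y hy using (hG1 y hy).deriv
    have : deriv^[2] G x = (2 * b * u x * (2 * (1 - u x) + b * x * (1 + u x))) / (1 - u x) ^ 3 := by
      show deriv (deriv G) x = _
      rw [Filter.EventuallyEq.deriv_eq hev]
      exact (hG2 x hx0).deriv
    rw [this]
    -- positivity
    have hu1 : u x < 1 := hult x hx0
    have hu0 : 0 < u x := hupos x
    have ht0 : 0 < -b * x := mul_pos (neg_pos.mpr hb) hx0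
    have hkey := key_exp (-b * x) ht0
    have heu : Real.exp (-b * x) * u x = 1 := by
      show Real.exp (-b * x) * Real.exp (b * x) = 1
      rw [← Real.exp_add, show -b * x + b * x = 0 by ring, Real.exp_zero]
    have hfac : 2 * (1 - u x) + b * x * (1 + u x) < 0 := by
      nlinarith [mul_lt_mul_of_pos_right hkey hu0, Real.exp_pos (-b * x)]
    have hnum : 2 * b * u x * (2 * (1 - u x) + b * x * (1 + u x)) > 0 := by
      apply mul_pos_of_neg_of_neg _ hfac
      nlinarith [mul_pos (neg_pos.mpr hb) hu0]
    exact div_pos hnum (pow_pos (by linarith) 3)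

lemma spread_lemma {f : ℝ → ℝ} (hf : StrictConvexOn ℝ (Set.Ioi (0:ℝ)) f)
    {x y x' y' : ℝ} (hx : 0 < x) (hy' : 0 < x')
    (hs : x + y = x' + y') (hxy : x ≤ y) (hxy' : x' ≤ y')
    (hd : y - x < y' - x') : f x + f y < f x' + f y' := by
  have hx'x : x' < x := by linarith
  have hyy' : y < y' := by linarith
  have hx'y' : x' < y' := by linarith
  have hden : (0:ℝ) < y' - x' := by linarith
  set θ : ℝ := (y' - x) / (y' - x') with hθdef
  have hθ0 : 0 < θ := div_pos (by linarith) hden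
  have hθ1 : θ < 1 := by
    rw [div_lt_one hden]; linarith
  have hmem1 : x' ∈ Set.Ioi (0:ℝ) := hy'
  have hmem2 : y' ∈ Set.Ioi (0:ℝ) := by simp only [Set.mem_Ioi]; linarith
  have hcomb1 : θ • x' + (1 - θ) • y' = x := by
    simp only [smul_eq_mul, hθdef]
    field_simp
    ring
  have hcomb2 : (1 - θ) • x' + θ • y' = y := by
    simp only [smul_eq_mul, hθdef]
    field_simp
    linear_combination (x' - y') * hs
  have c1 : f (θ • x' + (1 - θ) • y') < θ • f x' + (1 - θ) • f y' :=
    hf.2 hmem1 hmem2 (ne_of_lt hx'y') hθ0 (by linarith) (by ring)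
  have c2 : f ((1 - θ) • x' + θ • y') < (1 - θ) • f x' + θ • f y' :=
    hf.2 hmem1 hmem2 (ne_of_lt hx'y') (by linarith) hθ0 (by ring)
  rw [hcomb1] at c1
  rw [hcomb2] at c2
  simp only [smul_eq_mul] at c1 c2
  nlinarith [c1, c2]

theorem stmt_1 (a : ℝ) (ha0 : 0 < a) (ha1 : a < 1)
    (h : ℝ → ℝ)
    (hh : ∀ x : ℝ, 0 < x → h x = x * (1 + a ^ x) / (1 - a ^ x))
    (ℓ₁ m₁ ℓ₂ m₂ : ℕ) (hℓ₁ : 1 ≤ ℓ₁) (hm₁ : 1 ≤ m₁) (hℓ₂ : 1 ≤ ℓ₂) (hm₂ : 1 ≤ m₂)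
    (hsum : ℓ₁ + m₁ = ℓ₂ + m₂)
    (hdiff : |(ℓ₁ : ℝ) - (m₁ : ℝ)| < |(ℓ₂ : ℝ) - (m₂ : ℝ)|) :
    h ℓ₁ + h m₁ < h ℓ₂ + h m₂ := by
  have hconv := h_strictConvex a ha0 ha1
  set f : ℝ → ℝ := fun x : ℝ => x * (1 + a ^ x) / (1 - a ^ x) with hfdef
  have p1 : (0:ℝ) < (ℓ₁ : ℝ) := by exact_mod_cast Nat.lt_of_lt_of_le Nat.zero_lt_one hℓ₁
  have p2 : (0:ℝ) < (m₁ : ℝ) := by exact_mod_cast Nat.lt_of_lt_of_le Nat.zero_lt_one hm₁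
  have p3 : (0:ℝ) < (ℓ₂ : ℝ) := by exact_mod_cast Nat.lt_of_lt_of_le Nat.zero_lt_one hℓ₂
  have p4 : (0:ℝ) < (m₂ : ℝ) := by exact_mod_cast Nat.lt_of_lt_of_le Nat.zero_lt_one hm₂
  rw [hh _ p1, hh _ p2, hh _ p3, hh _ p4]
  show f ℓ₁ + f m₁ < f ℓ₂ + f m₂
  have hs : (ℓ₁ : ℝ) + m₁ = (ℓ₂ : ℝ) + m₂ := by exact_mod_cast hsum
  rcases le_total (ℓ₁ : ℝ) (m₁ : ℝ) with h1 | h1 <;>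
    rcases le_total (ℓ₂ : ℝ) (m₂ : ℝ) with h2 | h2
  · have hd1 : |(ℓ₁ : ℝ) - m₁| = (m₁ : ℝ) - ℓ₁ := by
      rw [abs_sub_comm, abs_of_nonneg (by linarith)]
    have hd2 : |(ℓ₂ : ℝ) - m₂| = (m₂ : ℝ) - ℓ₂ := by
      rw [abs_sub_comm, abs_of_nonneg (by linarith)]
    rw [hd1, hd2] at hdiff
    exact spread_lemma hconv p1 p3 hs h1 h2 hdiff
  · have hd1 : |(ℓ₁ : ℝ) - m₁| = (m₁ : ℝ) - ℓ₁ := by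
      rw [abs_sub_comm, abs_of_nonneg (by linarith)]
    have hd2 : |(ℓ₂ : ℝ) - m₂| = (ℓ₂ : ℝ) - m₂ := abs_of_nonneg (by linarith)
    rw [hd1, hd2] at hdiff
    have := spread_lemma hconv p1 p4 (by linarith) h1 h2 hdiff
    linarith
  · have hd1 : |(ℓ₁ : ℝ) - m₁| = (ℓ₁ : ℝ) - m₁ := abs_of_nonneg (by linarith)
    have hd2 : |(ℓ₂ : ℝ) - m₂| = (m₂ : ℝ) - ℓ₂ := by
      rw [abs_sub_comm, abs_of_nonneg (by linarith)]
    rw [hd1, hd2] at hdiff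
    have := spread_lemma hconv p2 p3 (by linarith) h1 h2 hdiff
    linarith
  · have hd1 : |(ℓ₁ : ℝ) - m₁| = (ℓ₁ : ℝ) - m₁ := abs_of_nonneg (by linarith)
    have hd2 : |(ℓ₂ : ℝ) - m₂| = (ℓ₂ : ℝ) - m₂ := abs_of_nonneg (by linarith)
    rw [hd1, hd2] at hdiff
    have := spread_lemma hconv p2 p4 (by linarith) h1 h2 hdiff
    linarith
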